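/- arXiv:1912.10217 — 3 statements merged into one kernel-verified Lean document; each statement's English description precedes it below -/
import Mathlib

section
/- Let G ≤ Sym(Ω), let e be a G-invariant equivalence relation on Ω, and let Δ be a class of e. Then the restriction to Δ of the setwise stabilizer of Δ in the 2-closure G^(2) is contained in the 2-closure of the restriction G^Δ of the setwise stabilizer of Δ in G. -/
open MulAction

/-- The 2-closure of a permutation group `G ≤ Sym(Ω)`: all permutations of `Ω`
preserving every orbit of `G` on `Ω × Ω`. -/
def twoClosure {Ω : Type*} (G : Subgroup (Equiv.Perm Ω)) : Subgroup (Equiv.Perm Ω) where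
  carrier := {k | ∀ a b : Ω, (k a, k b) ∈ MulAction.orbit G ((a, b) : Ω × Ω)}
  one_mem' := by
    intro a b
    simp only [Equiv.Perm.one_apply]
    exact MulAction.mem_orbit_self ((a, b) : Ω × Ω)
  mul_mem' := by
    intro k l hk hl a b
    have h1 : ((l a, l b) : Ω × Ω) ∈ MulAction.orbit G ((a, b) : Ω × Ω) := hl a b
    have h2 := hk (l a) (l b)
    rw [(MulAction.orbit_eq_iff).2 h1] at h2
    simpa using h2
  inv_mem' := by
    intro k hk a b
    have h := hk (k⁻¹ a) (k⁻¹ b)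
    simp only [Equiv.Perm.coe_inv, Equiv.apply_symm_apply] at h
    have := (MulAction.orbit_eq_iff).2 h
    rw [this]
    exact MulAction.mem_orbit_self _

theorem le_twoClosure {Ω : Type*} (G : Subgroup (Equiv.Perm Ω)) : G ≤ twoClosure G := by
  intro g hg a b
  exact ⟨⟨g, hg⟩, rfl⟩

/-- The permutation group on `Δ` induced by the setwise stabilizer of `Δ` in `G`:
all permutations of `Δ` that agree on `Δ` with some element of `G`. -/
def restrictGroup {Ω : Type*} (G : Subgroup (Equiv.Perm Ω)) (Δ : Set Ω) :
    Subgroup (Equiv.Perm Δ) where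
  carrier := {σ | ∃ g ∈ G, ∀ x : Δ, (σ x : Ω) = g x}
  one_mem' := ⟨1, G.one_mem, by simp⟩
  mul_mem' := by
    rintro σ τ ⟨g, hg, hgs⟩ ⟨h, hh, hhs⟩
    refine ⟨g * h, G.mul_mem hg hh, fun x => ?_⟩
    show ((σ (τ x) : Ω)) = g (h (x : Ω))
    rw [hgs (τ x), hhs x]
  inv_mem' := by
    rintro σ ⟨g, hg, hgs⟩
    refine ⟨g⁻¹, G.inv_mem hg, fun x => ?_⟩
    have h := hgs (σ⁻¹ x)
    simp only [Equiv.Perm.coe_inv, Equiv.apply_symm_apply] at h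
    show ((σ⁻¹ x : Ω)) = g⁻¹ (x : Ω)
    rw [h]
    simp

/-- if `e` (the setoid `s`) is a `G`-invariant equivalence relation and
`Δ` is a class of `e`, then the restriction to `Δ` of (the setwise stabilizer of `Δ`
in) the 2-closure of `G` is contained in the 2-closure of the induced group `G^Δ`. -/
theorem twoClosure_restrict_le
    {Ω : Type*} [Finite Ω] (G : Subgroup (Equiv.Perm Ω)) (s : Setoid Ω)
    (hinv : ∀ g ∈ G, ∀ a b : Ω, s.r a b → s.r (g a) (g b))
    (a₀ : Ω) (Δ : Set Ω) (hΔ : Δ = {b | s.r b a₀}) :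
    ∀ k ∈ twoClosure G, ∀ hk : ∀ x : Ω, x ∈ Δ ↔ k x ∈ Δ,
      Equiv.Perm.subtypePerm k (fun x => (hk x).symm) ∈ twoClosure (restrictGroup G Δ) := by
  intro k hkG hk a b
  obtain ⟨⟨g, hg⟩, heq⟩ := hkG a b
  have ha : g (a : Ω) = k a := congrArg Prod.fst heq
  have hb : g (b : Ω) = k b := congrArg Prod.snd heq
  have hmem : ∀ x : Ω, x ∈ Δ ↔ s.r x a₀ := fun x => by rw [hΔ]; rfl
  have haΔ : s.r ((a : Ω)) a₀ := (hmem _).mp a.2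
  have hkaΔ : s.r (k a) a₀ := (hmem _).mp ((hk a).mp a.2)
  have hgaΔ : s.r (g (a : Ω)) a₀ := ha ▸ hkaΔ
  have hgmem : ∀ x : Ω, x ∈ Δ ↔ g x ∈ Δ := by
    intro x
    rw [hmem x, hmem (g x)]
    constructor
    · intro hx
      have h1 : s.r x (a : Ω) := s.trans hx (s.symm haΔ)
      exact s.trans (hinv g hg _ _ h1) hgaΔ
    · intro hx
      have h1 : s.r (g x) (g (a : Ω)) := s.trans hx (s.symm hgaΔ)
      have h2 := hinv g⁻¹ (G.inv_mem hg) _ _ h1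
      simp only [Equiv.Perm.coe_inv, Equiv.symm_apply_apply] at h2
      exact s.trans h2 haΔ
  refine ⟨⟨Equiv.Perm.subtypePerm g (fun x => (hgmem x).symm), ⟨g, hg, fun x => rfl⟩⟩, ?_⟩
  exact Prod.ext (Subtype.ext ha) (Subtype.ext hb)
end

section
/- Let Δ be a set of prime cardinality p, and let G be a proper transitive subgroup of AGL_1(Δ) (the normalizer in Sym(Δ) of a regular cyclic subgroup of order p). Then G is 2-closed: every permutation of Δ preserving all orbits of G on Δ × Δ belongs to G. -/
open MulAction

namespace TwoClosureAux

open Polynomial Finset Equiv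

variable {p : ℕ} [Fact p.Prime]


variable {p : ℕ} [Fact p.Prime]

lemma sum_pow_univ (n : ℕ) :
    ∑ x : ZMod p, x ^ n = if n ≠ 0 ∧ (p - 1) ∣ n then (-1 : ZMod p) else 0 := by
  have hp : p.Prime := Fact.out
  rcases eq_or_ne n 0 with rfl | hn
  · simp [Finset.card_univ, ZMod.card, ZMod.natCast_self]
  by_cases hd : (p - 1) ∣ n
  · rw [if_pos ⟨hn, hd⟩]
    rw [← Finset.sum_erase_add _ _ (Finset.mem_univ (0 : ZMod p)), zero_pow hn, add_zero]
    have h1 : ∀ x ∈ Finset.univ.erase (0 : ZMod p), x ^ n = 1 := by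
      intro x hx
      obtain ⟨c, rfl⟩ := hd
      rw [pow_mul, ZMod.pow_card_sub_one_eq_one (Finset.mem_erase.mp hx).1, one_pow]
    rw [Finset.sum_congr rfl h1, Finset.sum_const, Finset.card_erase_of_mem (Finset.mem_univ _),
      Finset.card_univ, ZMod.card, nsmul_eq_mul, mul_one, Nat.cast_sub hp.one_le,
      ZMod.natCast_self, Nat.cast_one, zero_sub]
  · rw [if_neg (by tauto)]
    -- find a with a^n ≠ 1, a ≠ 0
    obtain ⟨g, hg⟩ := IsCyclic.exists_generator (α := (ZMod p)ˣ)
    have hord : orderOf g = p - 1 := by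
      rw [orderOf_eq_card_of_forall_mem_zpowers hg, Nat.card_eq_fintype_card, Fintype.card_units, ZMod.card]
    have hgn : g ^ n ≠ 1 := by
      intro h
      exact hd (hord ▸ orderOf_dvd_of_pow_eq_one h)
    set a : ZMod p := ((g : (ZMod p)ˣ) : ZMod p) with ha
    have han : a ^ n ≠ 1 := by
      intro h
      apply hgn
      ext
      rw [Units.val_pow_eq_pow_val, h, Units.val_one]
    have haz : a ≠ 0 := g.ne_zero
    have key : a ^ n * ∑ x : ZMod p, x ^ n = ∑ x : ZMod p, x ^ n := by
      rw [Finset.mul_sum]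
      apply Finset.sum_nbij' (fun x => a * x) (fun x => a⁻¹ * x) <;>
        intro x _ <;>
        simp [mul_pow, haz, mul_assoc, inv_mul_cancel_left₀, mul_inv_cancel_left₀]
    have h2 : (a ^ n - 1) * ∑ x : ZMod p, x ^ n = 0 := by
      rw [sub_mul, one_mul]
      exact sub_eq_zero.mpr key
    rcases mul_eq_zero.mp h2 with h | h
    · exact absurd (sub_eq_zero.mp h) han
    · exact h





/-- helper: expand `∑ x, x^i * g.eval x` in terms of coefficients. -/
lemma sum_pow_mul_eval (g : Polynomial (ZMod p)) (i N : ℕ) (hdeg : g.natDegree < N) :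
    ∑ x : ZMod p, x ^ i * g.eval x
      = ∑ t ∈ Finset.range N, g.coeff t * (∑ x : ZMod p, x ^ (i + t)) := by
  have h1 : ∀ x : ZMod p, x ^ i * g.eval x = ∑ t ∈ Finset.range N, g.coeff t * x ^ (i + t) := by
    intro x
    rw [eval_eq_sum_range' hdeg x, Finset.mul_sum]
    apply Finset.sum_congr rfl
    intro t _
    rw [pow_add]
    ring
  rw [Finset.sum_congr rfl (fun x _ => h1 x), Finset.sum_comm]
  apply Finset.sum_congr rfl
  intro t _
  rw [← Finset.mul_sum]


lemma exists_si {m e P : ℕ} (hm1 : 1 ≤ m) (he2 : 2 ≤ e) (hem : e ≤ m) (hP : 2*m ≤ P) :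
    ∃ s i, 1 ≤ s ∧ i + s * e = P ∧ s + i ≤ P - m := by
  have hepos : 0 < e - 1 := by omega
  have hmain : ∃ s, 1 ≤ s ∧ m ≤ s * (e-1) ∧ s * e ≤ 2 * m := by
    obtain ⟨q, r, h1, h2⟩ : ∃ q r, (e-1) * q + r = m + e - 2 ∧ r < e - 1 :=
      ⟨(m + e - 2) / (e - 1), (m + e - 2) % (e - 1), Nat.div_add_mod _ _, Nat.mod_lt _ hepos⟩
    by_cases hq2 : 2 ≤ q
    · refine ⟨q, by omega, ?_, ?_⟩
      · have hqq : q * (e-1) = (e-1) * q := Nat.mul_comm _ _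
        omega
      · have hqe : q * (e-1) + q = q * e := by
          rw [← Nat.mul_succ]
          congr 1
          omega
        have key : m + e - 2 ≤ (m - e + 2) * (e - 1) := by
          have h5 : (m - e + 2) * (e - 1) = (m-e) * (e-1) + 2*(e-1) := by ring
          have h6 : (m-e) * 1 ≤ (m-e) * (e-1) := Nat.mul_le_mul_left _ hepos
          omega
        have hq3 : q * (e-1) ≤ (m - e + 2) * (e - 1) := by
          have h7 : q * (e-1) = (e-1) * q := Nat.mul_comm _ _
          omega
        have hq4 : q ≤ m - e + 2 := Nat.le_of_mul_le_mul_right hq3 hepos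
        have h8 : q * (e-1) = (e-1) * q := Nat.mul_comm _ _
        omega
    · refine ⟨2, by omega, ?_, by omega⟩
      have hq1 : q = 0 ∨ q = 1 := by omega
      rcases hq1 with h | h <;> rw [h] at h1 <;> omega
  obtain ⟨s, hs1, hA, hB⟩ := hmain
  have hse : s * (e-1) + s = s * e := by
    rw [← Nat.mul_succ]
    congr 1
    omega
  exact ⟨s, P - s * e, hs1, by omega, by omega⟩

theorem mcconnel (M : Finset (ZMod p)) (hM2 : 2 * M.card ≤ p - 1)
    (k : Equiv.Perm (ZMod p))
    (hk : ∀ x y : ZMod p, x ≠ y → ∃ a ∈ M, k x - k y = a * (x - y)) :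
    ∃ a ∈ M, ∃ b : ZMod p, ∀ x, k x = a * x + b := by
  classical
  have hp : p.Prime := Fact.out
  set m := M.card with hm
  obtain ⟨a0, ha0M, -⟩ := hk 0 1 zero_ne_one
  have hm1 : 1 ≤ m := Finset.card_pos.mpr ⟨a0, ha0M⟩
  have hp2 : 2 ≤ p := hp.two_le
  have hp3 : 3 ≤ p := by omega
  -- moments
  set S : ℕ → ℕ → ZMod p := fun s i => ∑ x : ZMod p, x ^ i * (k x) ^ s with hS
  -- power sums of the twisted maps vanish
  have hbij : ∀ w : ZMod p, w ∉ M → ∀ j : ℕ, j ≤ p - 2 →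
      ∑ x : ZMod p, (k x - w * x) ^ j = 0 := by
    intro w hw j hj
    have hinj : Function.Injective (fun x : ZMod p => k x - w * x) := by
      intro x y hxy
      by_contra hne
      obtain ⟨a, haM, ha⟩ := hk x y hne
      simp only at hxy
      have : (a - w) * (x - y) = 0 := by
        have : k x - k y = w * (x - y) := by linear_combination hxy
        rw [sub_mul, ← ha, this]
        ring
      rcases mul_eq_zero.mp this with h | h
      · exact hw (by rwa [sub_eq_zero.mp h] at haM)
      · exact hne (sub_eq_zero.mp h)
    have hbj : Function.Bijective (fun x : ZMod p => k x - w * x) :=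
      Finite.injective_iff_bijective.mp hinj
    have := Fintype.sum_bijective _ hbj (fun x => (k x - w * x) ^ j) (fun u => u ^ j)
      (fun x => rfl)
    rw [this, sum_pow_univ j, if_neg]
    rintro ⟨hj0, hjd⟩
    have := Nat.le_of_dvd (Nat.pos_of_ne_zero hj0) hjd
    omega
  -- the moment polynomial
  have hmom : ∀ s i : ℕ, s + i ≤ p - 1 - m → S s i = 0 := by
    intro s i hsi
    set j := s + i with hj
    set Q : Polynomial (ZMod p) :=
      ∑ l ∈ Finset.range (j + 1),
        Polynomial.C ((-1) ^ (j - l) * (j.choose l : ZMod p) * S l (j - l)) * X ^ (j - l)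
      with hQ
    have hQdeg : Q.natDegree ≤ j := by
      apply Polynomial.natDegree_sum_le_of_forall_le
      intro l hl
      exact (Polynomial.natDegree_C_mul_X_pow_le _ _).trans (Nat.sub_le _ _)
    have hQeval : ∀ w : ZMod p, w ∉ M → Q.eval w = 0 := by
      intro w hw
      have expand : ∀ x : ZMod p, (k x - w * x) ^ j
          = ∑ l ∈ Finset.range (j + 1),
              (k x) ^ l * ((-1) ^ (j - l) * w ^ (j - l) * x ^ (j - l)) * (j.choose l : ZMod p) := by
        intro x
        have := add_pow (k x) (-(w * x)) j
        rw [← sub_eq_add_neg] at this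
        rw [this]
        apply Finset.sum_congr rfl
        intro l _
        rw [neg_pow, mul_pow]
        ring
      have : Q.eval w = ∑ x : ZMod p, (k x - w * x) ^ j := by
        rw [hQ]
        rw [Polynomial.eval_finset_sum]
        simp only [Polynomial.eval_mul, Polynomial.eval_C, Polynomial.eval_pow, Polynomial.eval_X]
        rw [Finset.sum_congr rfl (fun x (_ : x ∈ Finset.univ) => expand x), Finset.sum_comm]
        apply Finset.sum_congr rfl
        intro l _
        rw [hS]
        simp only
        rw [Finset.mul_sum, Finset.sum_mul]
        apply Finset.sum_congr rfl
        intro x _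
        ring
      rw [this, hbij w hw j (by omega)]
    have hQ0 : Q = 0 := by
      apply Polynomial.eq_zero_of_natDegree_lt_card_of_eval_eq_zero' Q (Finset.univ \ M)
      · intro w hwmem
        exact hQeval w (Finset.mem_sdiff.mp hwmem).2
      · have hcard : (Finset.univ \ M).card = p - m := by
          rw [Finset.card_sdiff_of_subset (Finset.subset_univ M), Finset.card_univ, ZMod.card]
        omega
    -- extract coefficient at i
    have hcoe : Q.coeff i = (-1) ^ i * (j.choose s : ZMod p) * S s i := by
      rw [hQ, Polynomial.finset_sum_coeff]
      rw [Finset.sum_eq_single s]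
      · rw [Polynomial.coeff_C_mul, Polynomial.coeff_X_pow]
        have : j - s = i := by omega
        rw [this, if_pos rfl]
        ring
      · intro l hl hls
        rw [Polynomial.coeff_C_mul, Polynomial.coeff_X_pow, if_neg, mul_zero]
        intro h
        apply hls
        have := Finset.mem_range.mp hl
        omega
      · intro h
        exact absurd (Finset.mem_range.mpr (by omega)) h
    have hchoose : (j.choose s : ZMod p) ≠ 0 := by
      rw [Ne, ZMod.natCast_eq_zero_iff]
      intro hdvd
      have h1 : j.choose s * s.factorial * (j - s).factorial = j.factorial :=
        Nat.choose_mul_factorial_mul_factorial (by omega)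
      have h2 : p ∣ j.factorial := h1 ▸ (hdvd.mul_right _).mul_right _
      have := (Nat.Prime.dvd_factorial hp).mp h2
      omega
    have := hQ0 ▸ hcoe
    rw [Polynomial.coeff_zero] at this
    have h4 : ((-1 : ZMod p)) ^ i * ((j.choose s : ZMod p) * S s i) = 0 := by
      rw [← mul_assoc]; exact this.symm
    rcases mul_eq_zero.mp h4 with h | h
    · exact absurd h (pow_ne_zero _ (by simp))
    rcases mul_eq_zero.mp h with h | h
    · exact absurd h hchoose
    · exact h
  -- helper: bounded divisibility
  have eq_of_dvd : ∀ {a n : ℕ}, 0 < n → a ≠ 0 → a < 2*n → n ∣ a → a = n := by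
    intro a n h1 h2 h3 hd
    obtain ⟨c, rfl⟩ := hd
    rcases c with _ | _ | c
    · omega
    · omega
    · have h4 : n * 2 ≤ n * (c+1+1) := Nat.mul_le_mul_left n (by omega)
      omega
  -- the interpolation polynomial
  obtain ⟨f, hfeval, hfdeg⟩ : ∃ f : Polynomial (ZMod p), (∀ x, f.eval x = k x) ∧ f.natDegree < p := by
    refine ⟨Lagrange.interpolate Finset.univ id (⇑k), fun x => ?_, ?_⟩
    · have := Lagrange.eval_interpolate_at_node (v := (id : ZMod p → ZMod p)) (r := ⇑k)
        (Set.injOn_id _) (Finset.mem_univ x)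
      simpa using this
    · have hdeg := Lagrange.degree_interpolate_lt (s := (Finset.univ : Finset (ZMod p)))
        (v := id) (r := ⇑k) (Set.injOn_id _)
      rw [Finset.card_univ, ZMod.card] at hdeg
      by_cases hz : Lagrange.interpolate Finset.univ id (⇑k) = 0
      · rw [hz, Polynomial.natDegree_zero]; omega
      · exact (Polynomial.natDegree_lt_iff_degree_lt hz).mpr hdeg
  set W : ℕ → ZMod p := fun n => ∑ x : ZMod p, x ^ n with hW
  have hWtop : W (p-1) = -1 := by
    rw [hW]; simp only; rw [sum_pow_univ, if_pos ⟨by omega, dvd_refl _⟩]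
  -- coefficients above m vanish
  have hcoeff : ∀ t, m + 1 ≤ t → f.coeff t = 0 := by
    intro t ht
    by_cases htp : p ≤ t
    · exact Polynomial.coeff_eq_zero_of_natDegree_lt (by omega)
    · have h0 := hmom 1 (p - 1 - t) (by omega)
      set i := p - 1 - t with hidef
      have hexp : S 1 (p-1-t) = ∑ t' ∈ Finset.range p, f.coeff t' * W (i + t') := by
        rw [hS]; simp only
        have h2 : ∀ x : ZMod p, x ^ i * (k x) ^ 1 = x ^ i * f.eval x := by
          intro x; rw [pow_one, hfeval]
        rw [Finset.sum_congr rfl (fun x _ => h2 x)]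
        exact sum_pow_mul_eval f i p hfdeg
      rw [hexp] at h0
      rw [Finset.sum_eq_single t] at h0
      · have hit : i + t = p - 1 := by omega
        rw [hit, hWtop] at h0
        simpa using h0
      · intro b hb hbt
        have hWz : W (i + b) = 0 := by
          rw [hW]; simp only; rw [sum_pow_univ, if_neg]
          rintro ⟨h1, h2⟩
          have hb' := Finset.mem_range.mp hb
          have h5 := eq_of_dvd (show 0 < p - 1 by omega) h1 (by omega) h2
          omega
        rw [hWz, mul_zero]
      · intro ht'
        exact absurd (Finset.mem_range.mpr (by omega)) ht'
  have hdegle : f.natDegree ≤ m :=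
    Polynomial.natDegree_le_iff_coeff_eq_zero.mpr (fun N hN => hcoeff N (by omega))
  -- the degree must be at most 1
  have hdeg1 : f.natDegree ≤ 1 := by
    by_contra hgt
    push_neg at hgt
    set e := f.natDegree with he
    have he2 : 2 ≤ e := hgt
    obtain ⟨s, i, hs1, hsum, hsle⟩ := exists_si hm1 he2 hdegle hM2
    have h0 := hmom s i (by omega)
    have hfs : (f ^ s).natDegree = s * e := by
      rw [Polynomial.natDegree_pow]
    have hexp : S s i = ∑ t ∈ Finset.range (s*e + 1), (f^s).coeff t * W (i + t) := by
      rw [hS]; simp only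
      have h2 : ∀ x : ZMod p, x ^ i * (k x) ^ s = x ^ i * (f^s).eval x := by
        intro x; rw [Polynomial.eval_pow, hfeval]
      rw [Finset.sum_congr rfl (fun x _ => h2 x)]
      exact sum_pow_mul_eval (f^s) i (s*e+1) (by omega)
    rw [hexp] at h0
    rw [Finset.sum_eq_single (s*e)] at h0
    · rw [hsum, hWtop] at h0
      have hlc : (f^s).coeff (s*e) = (f.leadingCoeff) ^ s := by
        rw [← Polynomial.leadingCoeff_pow, ← hfs, Polynomial.coeff_natDegree]
      rw [hlc] at h0
      have hf0 : f ≠ 0 := by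
        intro h
        rw [h, Polynomial.natDegree_zero] at he
        omega
      have hne : f.leadingCoeff ^ s ≠ 0 :=
        pow_ne_zero _ (Polynomial.leadingCoeff_ne_zero.mpr hf0)
      apply hne
      simpa using h0
    · intro b hb hbne
      have hWz : W (i + b) = 0 := by
        rw [hW]; simp only; rw [sum_pow_univ, if_neg]
        rintro ⟨h1, h2⟩
        have hb' := Finset.mem_range.mp hb
        have h5 := eq_of_dvd (show 0 < p - 1 by omega) h1 (by omega) h2
        omega
      rw [hWz, mul_zero]
    · intro hmem
      exact absurd (Finset.mem_range.mpr (by omega)) hmem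
  -- conclude affine
  have hkform : ∀ x : ZMod p, k x = f.coeff 0 + f.coeff 1 * x := by
    intro x
    rw [← hfeval x, Polynomial.eval_eq_sum_range' (show f.natDegree < 2 by omega) x]
    simp [Finset.sum_range_succ]
  obtain ⟨a, haM, ha⟩ := hk 1 0 one_ne_zero
  have ha1 : k 1 - k 0 = a := by rw [ha]; ring
  rw [hkform 1, hkform 0] at ha1
  refine ⟨a, haM, f.coeff 0, fun x => ?_⟩
  rw [hkform x]
  have hca : f.coeff 1 = a := by linear_combination ha1
  rw [hca]; ring






/-- translation permutation -/
def τ (b : ZMod p) : Equiv.Perm (ZMod p) := Equiv.addRight b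

@[simp] lemma τ_apply (b x : ZMod p) : τ b x = x + b := rfl

lemma τ_mul (b c : ZMod p) : τ b * τ c = τ (b + c) := by
  ext x
  simp [τ, add_assoc, add_comm b c]

lemma τ_zero : τ (0 : ZMod p) = 1 := by
  ext x; simp [τ]

lemma τ_pow (c : ZMod p) (n : ℕ) : (τ c) ^ n = τ ((n : ZMod p) * c) := by
  induction n with
  | zero => rw [pow_zero]; rw [Nat.cast_zero, zero_mul, τ_zero]
  | succ n ih =>
    rw [pow_succ, ih, τ_mul]
    congr 1
    push_cast
    ring

lemma τ_inv (b : ZMod p) : (τ b)⁻¹ = τ (-b) := by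
  apply inv_eq_of_mul_eq_one_right
  rw [τ_mul, add_neg_cancel, τ_zero]

lemma τ_zpow (c : ZMod p) (j : ℤ) : (τ c) ^ j = τ ((j : ZMod p) * c) := by
  induction j using Int.induction_on with
  | zero => rw [zpow_zero]; rw [Int.cast_zero, zero_mul, τ_zero]
  | succ i ih =>
    rw [zpow_add, zpow_one, ih, τ_mul]
    congr 1
    push_cast
    ring
  | pred i ih =>
    rw [sub_eq_add_neg, zpow_add, ih, zpow_neg, zpow_one, τ_inv, τ_mul]
    congr 1
    push_cast
    ring

lemma τ_injective : Function.Injective (τ (p := p)) := by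
  intro a b h
  have := congrFun (congrArg (fun (e : Equiv.Perm (ZMod p)) => (e : ZMod p → ZMod p)) h) 0
  simpa using this

/-- affine permutation -/
def aff (a : (ZMod p)ˣ) (b : ZMod p) : Equiv.Perm (ZMod p) where
  toFun x := (a : ZMod p) * x + b
  invFun x := ((a⁻¹ : (ZMod p)ˣ) : ZMod p) * (x - b)
  left_inv := by
    intro x
    simp only [add_sub_cancel_right, ← mul_assoc, ← Units.val_mul, inv_mul_cancel, Units.val_one,
      one_mul]
  right_inv := by
    intro x
    simp only [← mul_assoc, ← Units.val_mul, mul_inv_cancel, Units.val_one, one_mul]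
    ring

@[simp] lemma aff_apply (a : (ZMod p)ˣ) (b : ZMod p) (x : ZMod p) :
    aff a b x = (a : ZMod p) * x + b := rfl

lemma aff_inv_apply (a : (ZMod p)ˣ) (b : ZMod p) (x : ZMod p) :
    (aff a b)⁻¹ x = ((a⁻¹ : (ZMod p)ˣ) : ZMod p) * (x - b) := rfl

lemma aff_conj_τ (a : (ZMod p)ˣ) (b c : ZMod p) :
    aff a b * τ c * (aff a b)⁻¹ = τ ((a : ZMod p) * c) := by
  ext x
  simp only [Equiv.Perm.mul_apply, aff_inv_apply, τ_apply, aff_apply]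
  have : (a : ZMod p) * ((a⁻¹ : (ZMod p)ˣ) : ZMod p) = 1 := by
    rw [← Units.val_mul, mul_inv_cancel, Units.val_one]
  calc (a : ZMod p) * (((a⁻¹ : (ZMod p)ˣ) : ZMod p) * (x - b) + c) + b
      = ((a : ZMod p) * ((a⁻¹ : (ZMod p)ˣ) : ZMod p)) * (x - b) + (a : ZMod p) * c + b := by ring
    _ = x + (a : ZMod p) * c := by rw [this]; ring

lemma mem_zpowers_τ_iff (g : Equiv.Perm (ZMod p)) :
    g ∈ Subgroup.zpowers (τ (1 : ZMod p)) ↔ ∃ b : ZMod p, g = τ b := by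
  constructor
  · rintro ⟨j, rfl⟩
    exact ⟨((j : ZMod p) * 1), (τ_zpow 1 j)⟩
  · rintro ⟨b, rfl⟩
    refine ⟨(b.val : ℤ), ?_⟩
    show (τ (1:ZMod p)) ^ ((b.val : ℤ)) = τ b
    rw [τ_zpow]
    congr 1
    push_cast
    rw [ZMod.natCast_val, ZMod.cast_id, mul_one]

lemma normalizer_iff (g : Equiv.Perm (ZMod p)) :
    g ∈ Subgroup.normalizer ((Subgroup.zpowers (τ (1 : ZMod p))) : Set (Equiv.Perm (ZMod p))) ↔ ∃ a b, g = aff a b := by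
  constructor
  · intro hg
    have hT : g * τ 1 * g⁻¹ ∈ Subgroup.zpowers (τ (1 : ZMod p)) := by
      rw [← Subgroup.mem_normalizer_iff.mp hg]
      exact Subgroup.mem_zpowers _
    obtain ⟨n, hn⟩ := (mem_zpowers_τ_iff _).mp hT
    have key : ∀ x : ZMod p, g (x + 1) = g x + n := by
      intro x
      have := congrFun (congrArg (fun (e : Equiv.Perm (ZMod p)) => (e : ZMod p → ZMod p)) hn) (g x)
      simpa using this
    have claim : ∀ j : ℕ, g ((j : ZMod p)) = g 0 + n * j := by
      intro j
      induction j with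
      | zero => simp
      | succ j ih =>
        push_cast
        rw [key, ih]
        push_cast
        ring
    have hn0 : n ≠ 0 := by
      intro h
      have h1 := key 0
      rw [h, add_zero, zero_add] at h1
      have := g.injective h1
      exact one_ne_zero this
    refine ⟨Units.mk0 n hn0, g 0, ?_⟩
    ext x
    rw [aff_apply]
    have := claim x.val
    rw [ZMod.natCast_val, ZMod.cast_id] at this
    rw [this]
    simp [add_comm]
  · rintro ⟨a, b, rfl⟩
    rw [Subgroup.mem_normalizer_iff]
    intro h
    constructor
    · intro hh
      obtain ⟨c, rfl⟩ := (mem_zpowers_τ_iff _).mp hh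
      rw [aff_conj_τ]
      exact (mem_zpowers_τ_iff _).mpr ⟨_, rfl⟩
    · intro hh
      obtain ⟨c, hc⟩ := (mem_zpowers_τ_iff _).mp hh
      have : h = (aff a b)⁻¹ * τ c * (aff a b) := by
        rw [← hc]; group
      rw [this]
      have conj2 : (aff a b)⁻¹ * τ c * (aff a b) = τ (((a⁻¹ : (ZMod p)ˣ) : ZMod p) * c) := by
        have := aff_conj_τ (p := p) a⁻¹ (((a⁻¹ : (ZMod p)ˣ) : ZMod p) * (0 - b)) c
        ext x
        simp only [Equiv.Perm.mul_apply, τ_apply, aff_apply, aff_inv_apply]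
        calc ((a⁻¹ : (ZMod p)ˣ) : ZMod p) * (((a:ZMod p) * x + b) + c - b)
            = ((a⁻¹ : (ZMod p)ˣ) : ZMod p) * ((a:ZMod p) * x) + ((a⁻¹ : (ZMod p)ˣ) : ZMod p) * c := by ring
          _ = x + ((a⁻¹ : (ZMod p)ˣ) : ZMod p) * c := by
              rw [← mul_assoc, ← Units.val_mul, inv_mul_cancel, Units.val_one, one_mul]
      rw [conj2]
      exact (mem_zpowers_τ_iff _).mpr ⟨_, rfl⟩

theorem zmod_main (G' : Subgroup (Equiv.Perm (ZMod p)))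
    (hle : G' ≤ Subgroup.normalizer ((Subgroup.zpowers (τ (1 : ZMod p))) : Set (Equiv.Perm (ZMod p))))
    (hne : G' ≠ Subgroup.normalizer ((Subgroup.zpowers (τ (1 : ZMod p))) : Set (Equiv.Perm (ZMod p))))
    (htrans : ∀ x y : ZMod p, ∃ g ∈ G', g x = y)
    (k : Equiv.Perm (ZMod p))
    (hk : ∀ x y : ZMod p, ∃ g ∈ G', g x = k x ∧ g y = k y) :
    k ∈ G' := by
  classical
  have hp : p.Prime := Fact.out
  -- the multiplier set
  set Mset : Set (ZMod p) := {a | ∃ g ∈ G', ∃ b, ∀ x, g x = a * x + b} with hMset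
  have haff : ∀ g ∈ G', ∃ (a : (ZMod p)ˣ) (b : ZMod p), g = aff a b := by
    intro g hg
    exact (normalizer_iff g).mp (hle hg)
  have haffM : ∀ (a : (ZMod p)ˣ) (b : ZMod p), aff a b ∈ G' → (a : ZMod p) ∈ Mset := by
    intro a b hab
    exact ⟨aff a b, hab, b, fun x => rfl⟩
  -- pigeonhole: G' contains a nontrivial translation
  have htranslation : ∀ b : ZMod p, τ b ∈ G' := by
    have hcard : p ≤ Fintype.card G' := by
      have hsurj : Function.Surjective (fun g : G' => (g : Equiv.Perm (ZMod p)) 0) := by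
        intro y
        obtain ⟨g, hg, hgy⟩ := htrans 0 y
        exact ⟨⟨g, hg⟩, hgy⟩
      calc p = Fintype.card (ZMod p) := (ZMod.card p).symm
        _ ≤ Fintype.card G' := Fintype.card_le_of_surjective _ hsurj
    obtain ⟨g, -, h, -, hgh, hfeq⟩ :=
      Finset.exists_ne_map_eq_of_card_lt_of_maps_to
        (s := (Finset.univ : Finset G'))
        (t := (Finset.univ.erase (0 : ZMod p)))
        (f := fun g => (g : Equiv.Perm (ZMod p)) 1 - (g : Equiv.Perm (ZMod p)) 0)
        (by
          have h1 : ((Finset.univ : Finset (ZMod p)).erase 0).card < p := by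
            rw [Finset.card_erase_of_mem (Finset.mem_univ _), Finset.card_univ, ZMod.card]
            have := hp.two_le
            omega
          calc ((Finset.univ : Finset (ZMod p)).erase 0).card < p := h1
            _ ≤ Fintype.card G' := hcard
            _ = (Finset.univ : Finset G').card := Finset.card_univ.symm)
        (by
          intro g _
          obtain ⟨a, b, hab⟩ := haff g g.2
          show ((g : Equiv.Perm (ZMod p)) 1 - (g : Equiv.Perm (ZMod p)) 0) ∈ _
          rw [Finset.mem_coe, Finset.mem_erase]
          refine ⟨?_, Finset.mem_univ _⟩
          rw [hab]
          simp only [aff_apply, mul_one, mul_zero, zero_add, add_sub_cancel_right]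
          exact a.ne_zero)
    obtain ⟨a, bg, hg⟩ := haff g g.2
    obtain ⟨a', bh, hh⟩ := haff h h.2
    have haa : a = a' := by
      apply Units.ext
      have := hfeq
      rw [hg, hh] at this
      simpa using this
    subst haa
    -- g * h⁻¹ is the translation by bg - bh
    have hcomp : (g : Equiv.Perm (ZMod p)) * (h : Equiv.Perm (ZMod p))⁻¹ = τ (bg - bh) := by
      ext x
      rw [hg, hh]
      simp only [Equiv.Perm.mul_apply, aff_inv_apply, aff_apply, τ_apply]
      have : (a : ZMod p) * ((a⁻¹ : (ZMod p)ˣ) : ZMod p) = 1 := by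
        rw [← Units.val_mul, mul_inv_cancel, Units.val_one]
      calc (a:ZMod p) * (((a⁻¹ : (ZMod p)ˣ) : ZMod p) * (x - bh)) + bg
          = ((a:ZMod p) * ((a⁻¹ : (ZMod p)ˣ) : ZMod p)) * (x - bh) + bg := by ring
        _ = x + (bg - bh) := by rw [this]; ring
    have hc0 : bg - bh ≠ 0 := by
      intro h0
      apply hgh
      have : bg = bh := by
        have := sub_eq_zero.mp h0
        exact this
      apply Subtype.ext
      rw [hg, hh, this]
    have hcmem : τ (bg - bh) ∈ G' := by
      rw [← hcomp]
      exact mul_mem g.2 (inv_mem h.2)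
    set c := bg - bh with hc
    intro b
    have : τ b = (τ c) ^ ((b * c⁻¹).val) := by
      rw [τ_pow, ZMod.natCast_val, ZMod.cast_id]
      congr 1
      field_simp
    rw [this]
    exact pow_mem hcmem _
  -- affine maps with multiplier in Mset are in G'
  have hbuild : ∀ (a : (ZMod p)ˣ) (b : ZMod p), (a : ZMod p) ∈ Mset → aff a b ∈ G' := by
    rintro a b ⟨g, hg, b0, hgform⟩
    have : aff a b = τ (b - b0) * g := by
      ext x
      simp only [Equiv.Perm.mul_apply, τ_apply, aff_apply, hgform x]
      ring
    rw [this]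
    exact mul_mem (htranslation _) hg
  -- Mset as a subgroup of units
  set Msub : Subgroup (ZMod p)ˣ :=
    { carrier := {u | (u : ZMod p) ∈ Mset}
      one_mem' := by
        refine ⟨1, one_mem G', 0, fun x => ?_⟩
        simp
      mul_mem' := by
        rintro u v ⟨g, hg, b, hgf⟩ ⟨g', hg', b', hgf'⟩
        refine ⟨g * g', mul_mem hg hg', (u : ZMod p) * b' + b, fun x => ?_⟩
        simp only [Equiv.Perm.mul_apply, hgf', hgf]
        push_cast
        ring
      inv_mem' := by
        rintro u ⟨g, hg, b, hgf⟩
        refine ⟨g⁻¹, inv_mem hg, -(((u⁻¹ : (ZMod p)ˣ) : ZMod p) * b), fun x => ?_⟩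
        apply g.injective
        have huu : (u : ZMod p) * ((u⁻¹ : (ZMod p)ˣ) : ZMod p) = 1 := by
          rw [← Units.val_mul, mul_inv_cancel, Units.val_one]
        rw [Equiv.Perm.coe_inv, Equiv.apply_symm_apply, hgf]
        rw [eq_comm]
        calc (u:ZMod p) * (((u⁻¹ : (ZMod p)ˣ):ZMod p) * x + -(((u⁻¹ : (ZMod p)ˣ):ZMod p) * b)) + b
            = ((u:ZMod p) * ((u⁻¹ : (ZMod p)ˣ):ZMod p)) * x
              - ((u:ZMod p) * ((u⁻¹ : (ZMod p)ˣ):ZMod p)) * b + b := by ring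
          _ = x := by rw [huu]; ring } with hMsub
  -- elements of Mset are nonzero and come from units in Msub
  have hM0 : ∀ a ∈ Mset, a ≠ 0 := by
    rintro a ⟨g, hg, b, hgf⟩ rfl
    obtain ⟨u, b', hu⟩ := haff g hg
    have h1 : g 0 = b := by rw [hgf]; ring
    have h2 : g 1 = b := by rw [hgf]; ring
    have := g.injective (h1.trans h2.symm)
    exact one_ne_zero this.symm
  -- cardinality facts
  set Mfin : Finset (ZMod p) := (Set.toFinite Mset).toFinset with hMfin
  have hmemMfin : ∀ a, a ∈ Mfin ↔ a ∈ Mset := fun a => Set.Finite.mem_toFinset _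
  have hcardeq : Nat.card Msub = Mfin.card := by
    have : Nat.card Msub = Nat.card Mset := by
      apply Nat.card_congr
      refine ⟨fun u => ⟨(u : (ZMod p)ˣ), u.2⟩,
        fun a => ⟨Units.mk0 a.1 (hM0 a.1 a.2), a.2⟩, ?_, ?_⟩
      · intro u
        apply Subtype.ext
        apply Units.ext
        rfl
      · intro a
        rfl
    rw [this, Nat.card_coe_set_eq, Set.ncard_eq_toFinset_card _ (Set.toFinite Mset)]
  have hMcard : 2 * Mfin.card ≤ p - 1 := by
    have hdvd : Nat.card Msub ∣ p - 1 := by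
      have := Subgroup.card_subgroup_dvd_card Msub
      rwa [Nat.card_eq_fintype_card (α := (ZMod p)ˣ), ZMod.card_units_eq_totient,
        Nat.totient_prime hp] at this
    have hnetop : Nat.card Msub ≠ p - 1 := by
      intro htop
      apply hne
      apply le_antisymm hle
      intro g hg
      obtain ⟨a, b, rfl⟩ := (normalizer_iff g).mp hg
      apply hbuild
      have : Msub = ⊤ := by
        apply Subgroup.eq_top_of_card_eq
        rw [htop, Nat.card_eq_fintype_card (α := (ZMod p)ˣ), ZMod.card_units_eq_totient,
          Nat.totient_prime hp]
      have ha : a ∈ Msub := by rw [this]; trivial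
      exact ha
    obtain ⟨c, hc⟩ := hdvd
    rcases c with _ | _ | c
    · have := hp.two_le; omega
    · rw [hcardeq] at hc hnetop; omega
    · rw [hcardeq] at hc
      have h4 : Mfin.card * 2 ≤ Mfin.card * (c+1+1) := Nat.mul_le_mul_left _ (by omega)
      omega
  -- apply the McConnel lemma
  have hdiff : ∀ x y : ZMod p, x ≠ y → ∃ a ∈ Mfin, k x - k y = a * (x - y) := by
    intro x y hxy
    obtain ⟨g, hg, hgx, hgy⟩ := hk x y
    obtain ⟨a, b, rfl⟩ := haff g hg
    refine ⟨(a : ZMod p), (hmemMfin _).mpr (haffM a b hg), ?_⟩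
    rw [← hgx, ← hgy]
    simp only [aff_apply]
    ring
  obtain ⟨a, haM, b, hab⟩ := mcconnel Mfin hMcard k hdiff
  rw [hmemMfin] at haM
  have : k = aff (Units.mk0 a (hM0 a haM)) b := by
    ext x
    rw [aff_apply, hab x]
    rfl
  rw [this]
  exact hbuild _ _ haM



end TwoClosureAux

open TwoClosureAux

/-- let `Δ` have prime cardinality `p`, let `C` be a regular cyclic
subgroup of `Sym(Δ)` of order `p`, so that `AGL₁(Δ)` is the normalizer of `C` in
`Sym(Δ)`.  Every proper transitive subgroup `G` of `AGL₁(Δ)` is 2-closed. -/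
theorem proper_transitive_subgroup_of_AGL1_is_two_closed
    {Δ : Type*} [Fintype Δ] {p : ℕ} (hp : p.Prime) (hcard : Nat.card Δ = p)
    (C : Subgroup (Equiv.Perm Δ)) (hC : Nat.card C = p) (hCcyc : IsCyclic C)
    (hCreg : ∀ a b : Δ, ∃ c ∈ C, c a = b)
    (G : Subgroup (Equiv.Perm Δ))
    (hGle : G ≤ Subgroup.normalizer (C : Set (Equiv.Perm Δ))) (hGne : G ≠ Subgroup.normalizer (C : Set (Equiv.Perm Δ)))
    (hGtrans : ∀ a b : Δ, ∃ g ∈ G, g a = b) :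
    twoClosure G = G := by
  classical
  haveI hpf : Fact p.Prime := ⟨hp⟩
  haveI : NeZero p := ⟨hp.pos.ne'⟩
  haveI : Fact (1 < p) := ⟨hp.one_lt⟩
  apply le_antisymm ?_ (le_twoClosure G)
  intro k hk
  have hk' : ∀ a b : Δ, ∃ g ∈ G, g a = k a ∧ g b = k b := by
    intro a b
    obtain ⟨u, hu⟩ := hk a b
    refine ⟨(u : Equiv.Perm Δ), u.2, ?_, ?_⟩
    · have := congrArg Prod.fst hu
      exact (by simpa using this : u • a = k a)
    · have := congrArg Prod.snd hu
      exact (by simpa using this : u • b = k b)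
  -- generator of C
  obtain ⟨σ0, hσ0⟩ := hCcyc.exists_generator
  set σ : Equiv.Perm Δ := (σ0 : Equiv.Perm Δ) with hσ
  have hσC : σ ∈ C := σ0.2
  have hCz : C = Subgroup.zpowers σ := by
    apply le_antisymm
    · intro x hx
      obtain ⟨j, hj⟩ := hσ0 ⟨x, hx⟩
      exact ⟨j, by simpa using congrArg Subtype.val hj⟩
    · exact (Subgroup.zpowers_le).mpr hσC
  have hσp : σ ^ p = 1 := by
    have h1 : σ0 ^ p = 1 := by
      rw [← hC]
      exact pow_card_eq_one'
    have h2 : ((σ0 ^ p : C) : Equiv.Perm Δ) = σ ^ p := by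
      push_cast
      rfl
    rw [← h2, h1]
    rfl
  have hσne : σ ≠ 1 := by
    intro h
    rw [hCz, h, Subgroup.zpowers_one_eq_bot] at hC
    have h1 : Nat.card ((⊥ : Subgroup (Equiv.Perm Δ))) = 1 := by simp
    have h2 := hp.two_le
    omega
  have hσord : orderOf σ = p := by
    have h1 : orderOf σ ∣ p := orderOf_dvd_of_pow_eq_one hσp
    rcases (Nat.Prime.eq_one_or_self_of_dvd hp _ h1) with h | h
    · exact absurd (orderOf_eq_one_iff.mp h) hσne
    · exact h
  -- base point and the equivalence
  have hΔfin : Nonempty Δ := by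
    have h0 : 0 < Nat.card Δ := by rw [hcard]; exact hp.pos
    exact (Nat.card_pos_iff.mp h0).1
  obtain ⟨a0⟩ := hΔfin
  have hFbij : Function.Bijective (fun w : C => (w : Equiv.Perm Δ) a0) := by
    rw [Fintype.bijective_iff_surjective_and_card]
    constructor
    · intro y
      obtain ⟨c, hc, hcy⟩ := hCreg a0 y
      exact ⟨⟨c, hc⟩, hcy⟩
    · rw [← Nat.card_eq_fintype_card, ← Nat.card_eq_fintype_card, hC, hcard]
  have hepre : Function.Bijective (fun i : ZMod p => (σ ^ (i.val)) a0) := by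
    rw [Fintype.bijective_iff_injective_and_card]
    constructor
    · intro i j hij
      have h1 : (⟨σ ^ i.val, pow_mem hσC _⟩ : C) = ⟨σ ^ j.val, pow_mem hσC _⟩ :=
        hFbij.1 hij
      have h2 : σ ^ i.val = σ ^ j.val := congrArg Subtype.val h1
      have h3 := (pow_eq_pow_iff_modEq).mp h2
      rw [hσord] at h3
      have h4 : i.val = j.val := by
        have hi := ZMod.val_lt i
        have hj := ZMod.val_lt j
        rwa [Nat.ModEq, Nat.mod_eq_of_lt hi, Nat.mod_eq_of_lt hj] at h3
      exact ZMod.val_injective p h4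
    · rw [ZMod.card, ← hcard, Nat.card_eq_fintype_card]
  set e : ZMod p ≃ Δ := Equiv.ofBijective _ hepre with he
  have he_apply : ∀ i, e i = (σ ^ (i.val)) a0 := fun i => rfl
  have hshift : ∀ i : ZMod p, e (i + 1) = σ (e i) := by
    intro i
    rw [he_apply, he_apply]
    have h1 : (i+1).val = (i.val + 1) % p := by
      rw [ZMod.val_add, ZMod.val_one]
    have h2 := pow_mod_orderOf σ (i.val + 1)
    rw [hσord] at h2
    rw [h1, h2, pow_succ']
    rfl
  -- the conjugation isomorphism
  set Φ : Equiv.Perm Δ ≃* Equiv.Perm (ZMod p) :=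
    { toFun := fun g => (e.trans g).trans e.symm
      invFun := fun h => (e.symm.trans h).trans e
      left_inv := by intro g; ext x; simp
      right_inv := by intro h; ext x; simp
      map_mul' := by intro g h; ext x; simp } with hΦ
  have Φ_apply : ∀ g x, Φ g x = e.symm (g (e x)) := fun g x => rfl
  have hΦσ : Φ σ = τ (1 : ZMod p) := by
    ext x
    rw [Φ_apply, τ_apply, ← hshift, Equiv.symm_apply_apply]
  set G' := G.map Φ.toMonoidHom with hG'
  have hC' : C.map Φ.toMonoidHom = Subgroup.zpowers (τ (1:ZMod p)) := by
    rw [hCz, MonoidHom.map_zpowers, show Φ.toMonoidHom σ = τ (1:ZMod p) from hΦσ]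
  have hle' : G' ≤ Subgroup.normalizer ((Subgroup.zpowers (τ (1:ZMod p))) : Set (Equiv.Perm (ZMod p))) := by
    rw [← hC', ← Subgroup.map_equiv_normalizer_eq C Φ]
    exact Subgroup.map_mono hGle
  have hne' : G' ≠ Subgroup.normalizer ((Subgroup.zpowers (τ (1:ZMod p))) : Set (Equiv.Perm (ZMod p))) := by
    rw [← hC', ← Subgroup.map_equiv_normalizer_eq C Φ]
    intro h
    exact hGne (Subgroup.map_injective Φ.injective h)
  have htrans' : ∀ x y : ZMod p, ∃ g ∈ G', g x = y := by
    intro x y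
    obtain ⟨g, hg, hgxy⟩ := hGtrans (e x) (e y)
    refine ⟨Φ g, ⟨g, hg, rfl⟩, ?_⟩
    rw [Φ_apply, hgxy, Equiv.symm_apply_apply]
  have hkpair : ∀ x y : ZMod p, ∃ g' ∈ G', g' x = (Φ k) x ∧ g' y = (Φ k) y := by
    intro x y
    obtain ⟨g, hg, h1, h2⟩ := hk' (e x) (e y)
    exact ⟨Φ g, ⟨g, hg, rfl⟩, by rw [Φ_apply, Φ_apply, h1], by rw [Φ_apply, Φ_apply, h2]⟩
  have hmem := zmod_main G' hle' hne' htrans' (Φ k) hkpair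
  obtain ⟨g, hgG, hgk⟩ := Subgroup.mem_map.mp hmem
  have heq : g = k := Φ.injective hgk
  rwa [← heq]
end

section
/- Let G be a supersolvable permutation group on Ω, let F = {e_0 ⊂ e_1 ⊂ ... ⊂ e_m} be a maximal normal G-flag, and let S = (G_{e_i})^{Ω_i} be an F-section of G. Then there is a prime p such that every orbit of S has cardinality exactly p. -/
/-- A group is supersolvable if it has a normal series (all terms normal in the
whole group) with cyclic factors; the cyclic-factor condition is phrased as: each
successive quotient is generated by one coset. -/
def IsSupersolvable (G : Type*) [Group G] : Prop :=
  ∃ (n : ℕ) (c : Fin (n + 1) → Subgroup G),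
    c 0 = ⊥ ∧ c (Fin.last n) = ⊤ ∧
    (∀ i : Fin n, c i.castSucc ≤ c i.succ) ∧
    (∀ i : Fin (n + 1), (c i).Normal) ∧
    (∀ i : Fin n, ∃ g ∈ c i.succ, ∀ x ∈ c i.succ, ∃ m : ℤ, (g ^ m)⁻¹ * x ∈ c i.castSucc)

/-- The subgroup of all permutations stabilizing every class of the equivalence
relation `s` setwise. -/
def classStab {Ω : Type*} (s : Setoid Ω) : Subgroup (Equiv.Perm Ω) where
  carrier := {g | ∀ a : Ω, s.r (g a) a}
  one_mem' := fun a => s.refl' a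
  mul_mem' := by
    intro g l hg hl a
    exact s.trans' (hg (l a)) (hl a)
  inv_mem' := by
    intro g hg a
    have := hg (g⁻¹ a)
    have h2 : g (g⁻¹ a) = a := by simp
    rw [h2] at this
    exact s.symm' this

theorem IsSupersolvable.of_surjective {G K : Type*} [Group G] [Group K]
    (f : G →* K) (hf : Function.Surjective f) (h : IsSupersolvable G) : IsSupersolvable K := by
  obtain ⟨n, c, h0, hl, hmono, hnorm, hcyc⟩ := h
  refine ⟨n, fun j => (c j).map f, ?_, ?_, ?_, ?_, ?_⟩
  · simp only []; rw [h0]; exact Subgroup.map_bot f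
  · simp only []; rw [hl]; exact Subgroup.map_top_of_surjective f hf
  · intro j; exact Subgroup.map_mono (hmono j)
  · intro j; exact (hnorm j).map f hf
  · intro j
    obtain ⟨g, hg, hgen⟩ := hcyc j
    refine ⟨f g, Subgroup.mem_map_of_mem f hg, ?_⟩
    rintro x hx
    obtain ⟨y, hy, rfl⟩ := hx
    obtain ⟨mm, hm⟩ := hgen y hy
    refine ⟨mm, ?_⟩
    rw [← map_zpow, ← map_inv, ← map_mul]
    exact Subgroup.mem_map_of_mem f hm

def quotPermHom {Ω : Type*} {s : Setoid Ω} (G : Subgroup (Equiv.Perm Ω))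
    (hinv : ∀ g ∈ G, ∀ a b : Ω, s.r a b → s.r (g a) (g b)) :
    ↥G →* Equiv.Perm (Quotient s) where
  toFun g :=
    { toFun := Quotient.map' ⇑(g : Equiv.Perm Ω) (fun a b h => hinv _ g.2 a b h)
      invFun := Quotient.map' ⇑((g : Equiv.Perm Ω)⁻¹) (fun a b h => hinv _ (inv_mem g.2) a b h)
      left_inv := fun q => Quotient.inductionOn' q (fun a => by
        simp [Quotient.map'_mk''])
      right_inv := fun q => Quotient.inductionOn' q (fun a => by
        simp [Quotient.map'_mk'']) }
  map_one' := by
    ext q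
    refine Quotient.inductionOn' q (fun a => ?_)
    simp [Quotient.map'_mk'']
    rfl
  map_mul' g h := by
    ext q
    refine Quotient.inductionOn' q (fun a => ?_)
    simp [Quotient.map'_mk'']
    rfl

theorem quotPermHom_mk {Ω : Type*} {s : Setoid Ω} (G : Subgroup (Equiv.Perm Ω))
    (hinv : ∀ g ∈ G, ∀ a b : Ω, s.r a b → s.r (g a) (g b)) (g : ↥G) (a : Ω) :
    quotPermHom G hinv g (Quotient.mk s a) = Quotient.mk s ((g : Equiv.Perm Ω) a) := rfl

/-- let `G` be a supersolvable permutation group on `Ω`, let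
`F = {e_0 ⊂ e_1 ⊂ ⋯ ⊂ e_m}` be a maximal normal `G`-flag, and for `1 ≤ i ≤ m` let
`S = (G_{e_i})^{Ω_i}` be the corresponding `F`-section, acting on the union `Ω_i` of
the non-singleton orbits of `G_{e_i}` on `Ω/e_{i-1}`.  Then there is a prime `p` such
that every orbit of `S` has cardinality exactly `p` (equivalently, every
non-singleton orbit of `G_{e_i}` on `Ω/e_{i-1}` has cardinality `p`). -/
theorem section_orbits_prime
    {Ω : Type*} [Finite Ω] (G : Subgroup (Equiv.Perm Ω)) (hss : IsSupersolvable G)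
    (m : ℕ) (e : Fin (m + 1) → Setoid Ω)
    -- `F` is a flag: from the identity relation up to the orbit partition, strictly increasing
    (hbot : ∀ a b : Ω, (e 0).r a b ↔ a = b)
    (htop : ∀ a b : Ω, (e (Fin.last m)).r a b ↔ b ∈ MulAction.orbit G a)
    (hchain : ∀ i : Fin m, (∀ a b : Ω, (e i.castSucc).r a b → (e i.succ).r a b)
      ∧ e i.castSucc ≠ e i.succ)
    -- each `e_i` is `G`-invariant
    (hinv : ∀ i : Fin (m + 1), ∀ g ∈ G, ∀ a b : Ω, (e i).r a b → (e i).r (g a) (g b))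
    -- the flag is normal: the orbits of `G_{e_i}` are exactly the classes of `e_i`
    (hnormal : ∀ i : Fin (m + 1), ∀ a b : Ω,
      (e i).r a b ↔ ∃ g ∈ G ⊓ classStab (e i), g a = b)
    -- the flag is maximal: no normal `G`-invariant equivalence relation lies strictly
    -- between `e_{i-1}` and `e_i`
    (hmax : ∀ i : Fin m, ∀ s : Setoid Ω,
      (∀ g ∈ G, ∀ a b : Ω, s.r a b → s.r (g a) (g b)) →
      (∀ a b : Ω, s.r a b ↔ ∃ g ∈ G ⊓ classStab s, g a = b) →
      (∀ a b : Ω, (e i.castSucc).r a b → s.r a b) →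
      (∀ a b : Ω, s.r a b → (e i.succ).r a b) →
      s = e i.castSucc ∨ s = e i.succ)
    (i : Fin m) :
    ∃ p : ℕ, p.Prime ∧ ∀ a : Ω,
      (Set.ncard {x : Quotient (e i.castSucc) |
          ∃ g ∈ G ⊓ classStab (e i.succ), x = Quotient.mk (e i.castSucc) (g a)} ≠ 1 →
        Set.ncard {x : Quotient (e i.castSucc) |
          ∃ g ∈ G ⊓ classStab (e i.succ), x = Quotient.mk (e i.castSucc) (g a)} = p) := by
  classical
  let φ : ↥G →* Equiv.Perm (Quotient (e i.castSucc)) := quotPermHom G (hinv i.castSucc)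
  let φ' := φ.rangeRestrict
  have hφ'surj : Function.Surjective φ' := φ.rangeRestrict_surjective
  have hssK : IsSupersolvable ↥φ.range := hss.of_surjective φ' hφ'surj
  have hφmk : ∀ (g : ↥G) (a : Ω),
      φ g (Quotient.mk (e i.castSucc) a) = Quotient.mk (e i.castSucc) ((g : Equiv.Perm Ω) a) :=
    fun g a => rfl
  -- the subgroup H = G ⊓ classStab e_i, inside G, and its image Hbar in K = φ.range
  let Hsub : Subgroup ↥G := (G ⊓ classStab (e i.succ)).subgroupOf G
  have hHsubNormal : Hsub.Normal := by
    constructor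
    intro h hh g
    rw [Subgroup.mem_subgroupOf, Subgroup.mem_inf] at hh ⊢
    constructor
    · exact mul_mem (mul_mem g.2 hh.1) (inv_mem g.2)
    · intro a
      have h2 : (e i.succ).r ((h : Equiv.Perm Ω) ((g : Equiv.Perm Ω)⁻¹ a)) ((g : Equiv.Perm Ω)⁻¹ a) :=
        hh.2 ((g : Equiv.Perm Ω)⁻¹ a)
      have h3 := hinv i.succ (g : Equiv.Perm Ω) g.2 _ _ h2
      simpa using h3
  let Hbar : Subgroup ↥φ.range := Hsub.map φ'
  have hHbarNormal : Hbar.Normal := hHsubNormal.map φ' hφ'surj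
  -- members of Hbar stabilize the classes of e i.succ and map classes of e i.castSucc around
  have hHbarNeBot : Hbar ≠ ⊥ := by
    intro hb
    apply (hchain i).2
    apply Setoid.ext
    intro a b
    constructor
    · exact (hchain i).1 a b
    · intro hab
      obtain ⟨g, hg, hgab⟩ := (hnormal i.succ a b).mp hab
      have hgH : (⟨g, hg.1⟩ : ↥G) ∈ Hsub := by
        rw [Subgroup.mem_subgroupOf]; exact hg
      have : φ' ⟨g, hg.1⟩ ∈ Hbar := Subgroup.mem_map_of_mem φ' hgH
      rw [hb, Subgroup.mem_bot] at this
      have h1 : φ ⟨g, hg.1⟩ = 1 := congrArg Subtype.val this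
      have h2 : Quotient.mk (e i.castSucc) (g a) = Quotient.mk (e i.castSucc) a := by
        rw [← hφmk ⟨g, hg.1⟩ a, h1]; rfl
      rw [hgab] at h2
      exact Quotient.eq.mp h2.symm
  -- a minimal (by cardinality) nontrivial normal subgroup of K contained in Hbar
  have hTne : {n : ℕ | ∃ N : Subgroup ↥φ.range,
      (N.Normal ∧ N ≤ Hbar ∧ N ≠ ⊥) ∧ Nat.card ↥N = n}.Nonempty :=
    ⟨Nat.card ↥Hbar, Hbar, ⟨hHbarNormal, le_refl _, hHbarNeBot⟩, rfl⟩
  obtain ⟨M, ⟨hMnorm, hMle, hMne⟩, hMcard⟩ := Nat.sInf_mem hTne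
  have hmin : ∀ N : Subgroup ↥φ.range, N.Normal → N ≤ Hbar → N ≠ ⊥ →
      Nat.card ↥M ≤ Nat.card ↥N := fun N h1 h2 h3 =>
    hMcard ▸ Nat.sInf_le ⟨N, ⟨h1, h2, h3⟩, rfl⟩
  have hdich : ∀ N : Subgroup ↥φ.range, N.Normal → N ≤ M → N = ⊥ ∨ N = M := by
    intro N h1 h2
    by_cases h3 : N = ⊥
    · exact Or.inl h3
    · exact Or.inr (Subgroup.eq_of_le_of_card_ge h2 (hmin N h1 (h2.trans hMle) h3))
  -- M is cyclic: it crosses the supersolvable chain at exactly one step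
  obtain ⟨n, c, hc0, hclast, hcmono, hcnorm, hccyc⟩ := hssK
  have hMc : ∀ j : Fin (n + 1), M ⊓ c j = ⊥ ∨ M ⊓ c j = M := by
    intro j
    have hn : (M ⊓ c j).Normal := by
      haveI := hMnorm; haveI := hcnorm j
      exact Subgroup.normal_inf_normal M (c j)
    exact hdich _ hn inf_le_left
  have hM0 : M ⊓ c 0 = ⊥ := by rw [hc0]; exact inf_bot_eq M
  have hMlast : M ⊓ c (Fin.last n) = M := by rw [hclast]; exact inf_top_eq M
  have hcross : ∃ j : Fin n, M ⊓ c j.castSucc = ⊥ ∧ M ⊓ c j.succ = M := by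
    by_contra hcon
    push_neg at hcon
    have hall : ∀ j : Fin (n + 1), M ⊓ c j = ⊥ := by
      intro j
      induction j using Fin.induction with
      | zero => exact hM0
      | succ j ih =>
        rcases hMc j.succ with h | h
        · exact h
        · exact absurd h (hcon j ih)
    exact hMne (by rw [← hMlast, hall])
  obtain ⟨j, hj0, hj1⟩ := hcross
  have hMleC1 : M ≤ c j.succ := inf_eq_left.mp hj1
  obtain ⟨g, hg, hgen⟩ := hccyc j
  haveI hC0norm : ((c j.castSucc).subgroupOf (c j.succ)).Normal :=
    (hcnorm j.castSucc).subgroupOf (c j.succ)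
  haveI hQGcyc : IsCyclic (↥(c j.succ) ⧸ (c j.castSucc).subgroupOf (c j.succ)) := by
    constructor
    refine ⟨QuotientGroup.mk' _ ⟨g, hg⟩, ?_⟩
    intro x
    refine QuotientGroup.induction_on x ?_
    intro y
    obtain ⟨mm, hm⟩ := hgen (y : ↥φ.range) y.2
    refine ⟨mm, ?_⟩
    show (QuotientGroup.mk' ((c j.castSucc).subgroupOf (c j.succ)) ⟨g, hg⟩) ^ mm =
        QuotientGroup.mk' ((c j.castSucc).subgroupOf (c j.succ)) y
    rw [← map_zpow, QuotientGroup.mk'_eq_mk']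
    refine ⟨(⟨g, hg⟩ ^ mm)⁻¹ * y, ?_, by group⟩
    rw [Subgroup.mem_subgroupOf]
    simpa using hm
  let θ : ↥M →* (↥(c j.succ) ⧸ (c j.castSucc).subgroupOf (c j.succ)) :=
    (QuotientGroup.mk' _).comp (Subgroup.inclusion hMleC1)
  have hθinj : Function.Injective θ := by
    rw [← MonoidHom.ker_eq_bot_iff, eq_bot_iff]
    intro x hx
    have h1 : Subgroup.inclusion hMleC1 x ∈ (c j.castSucc).subgroupOf (c j.succ) := by
      rwa [MonoidHom.mem_ker, MonoidHom.comp_apply, QuotientGroup.mk'_apply,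
        QuotientGroup.eq_one_iff] at hx
    rw [Subgroup.mem_subgroupOf] at h1
    have h2 : (x : ↥φ.range) ∈ c j.castSucc := by
      simpa [Subgroup.coe_inclusion] using h1
    have h3 : (x : ↥φ.range) ∈ M ⊓ c j.castSucc := ⟨x.2, h2⟩
    rw [hj0, Subgroup.mem_bot] at h3
    rw [Subgroup.mem_bot]
    exact Subtype.ext h3
  haveI hMcyc : IsCyclic ↥M :=
    isCyclic_of_surjective (MonoidHom.ofInjective hθinj).symm (MonoidHom.ofInjective hθinj).symm.surjective
  obtain ⟨ζ, hζ⟩ := hMcyc.exists_generator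
  have hzM : (ζ : ↥φ.range) ∈ M := ζ.2
  have hMz : M = Subgroup.zpowers (ζ : ↥φ.range) := by
    apply le_antisymm
    · intro x hx
      obtain ⟨k, hk⟩ := Subgroup.mem_zpowers_iff.mp (hζ ⟨x, hx⟩)
      refine Subgroup.mem_zpowers_iff.mpr ⟨k, ?_⟩
      have := congrArg (Subtype.val) hk
      simpa using this
    · exact Subgroup.zpowers_le.mpr hzM
  set z : ↥φ.range := (ζ : ↥φ.range) with hzdef
  have hzne : z ≠ 1 := by
    intro h
    exact hMne (by rw [hMz, h, Subgroup.zpowers_one_eq_bot])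
  have hordz : orderOf z ≠ 1 := fun h => hzne (orderOf_eq_one_iff.mp h)
  set p : ℕ := (orderOf z).minFac with hpdef
  have hp : p.Prime := Nat.minFac_prime hordz
  have hpdvd : p ∣ orderOf z := Nat.minFac_dvd _
  -- z^p generates a normal subgroup strictly smaller than M, hence trivial
  have hM'norm : (Subgroup.zpowers (z ^ p)).Normal := by
    constructor
    intro x hx k
    obtain ⟨t, ht⟩ := Subgroup.mem_zpowers_iff.mp hx
    have hconj : k * z * k⁻¹ ∈ M := hMnorm.conj_mem z hzM k
    rw [hMz] at hconj
    obtain ⟨u, hu⟩ := Subgroup.mem_zpowers_iff.mp hconj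
    refine Subgroup.mem_zpowers_iff.mpr ⟨u * t, ?_⟩
    subst ht
    have e1 : (z ^ p) ^ t = z ^ ((p : ℤ) * t) := by rw [← zpow_natCast z p, ← zpow_mul]
    have e2 : k * z ^ ((p : ℤ) * t) * k⁻¹ = (k * z * k⁻¹) ^ ((p : ℤ) * t) := (conj_zpow).symm
    rw [e1, e2, ← hu, ← zpow_natCast z p, ← zpow_mul, ← zpow_mul]
    congr 1
    ring
  have hM'bot : Subgroup.zpowers (z ^ p) = ⊥ := by
    by_contra hne
    have hle : Subgroup.zpowers (z ^ p) ≤ M := Subgroup.zpowers_le.mpr (by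
      rw [hMz]; exact pow_mem (Subgroup.mem_zpowers z) p)
    have heq : Subgroup.zpowers (z ^ p) = M :=
      Subgroup.eq_of_le_of_card_ge hle (hmin _ hM'norm (hle.trans hMle) hne)
    have hzmem : z ∈ Subgroup.zpowers (z ^ p) := heq ▸ hzM
    obtain ⟨t, ht⟩ := Subgroup.mem_zpowers_iff.mp hzmem
    have h1 : z ^ ((p : ℤ) * t) = z := by rw [zpow_mul, zpow_natCast]; exact ht
    have h2 : z ^ ((p : ℤ) * t - 1) = 1 := by
      rw [zpow_sub, h1, zpow_one, mul_inv_cancel]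
    have h3 : ((orderOf z : ℤ)) ∣ ((p : ℤ) * t - 1) := orderOf_dvd_iff_zpow_eq_one.mpr h2
    have h4 : (p : ℤ) ∣ ((p : ℤ) * t - 1) := (Int.natCast_dvd_natCast.mpr hpdvd).trans h3
    have h5 : (p : ℤ) ∣ ((p : ℤ) * t - ((p : ℤ) * t - 1)) := dvd_sub (dvd_mul_right _ _) h4
    rw [sub_sub_cancel] at h5
    have h6 : p ∣ 1 := Int.natCast_dvd_natCast.mp (by exact_mod_cast h5)
    exact hp.ne_one (Nat.dvd_one.mp h6)
  have hzp : z ^ p = 1 := Subgroup.zpowers_eq_bot.mp hM'bot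
  have hordp : orderOf z = p :=
    ((hp.eq_one_or_self_of_dvd _ (orderOf_dvd_of_pow_eq_one hzp)).resolve_left hordz)
  have hcardM : Nat.card ↥M = p := by rw [hMz, Nat.card_zpowers, hordp]
  -- the setoid of M-orbits on the quotient Ω / e_{i-1}
  let s : Setoid Ω :=
    { r := fun a b => ∃ w : ↥φ.range, w ∈ M ∧
        (w : Equiv.Perm (Quotient (e i.castSucc))) (Quotient.mk (e i.castSucc) a) =
          Quotient.mk (e i.castSucc) b
      iseqv := by
        constructor
        · intro a; exact ⟨1, M.one_mem, rfl⟩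
        · rintro a b ⟨w, hw, hab⟩
          refine ⟨w⁻¹, inv_mem hw, ?_⟩
          rw [← hab]
          simp
        · rintro a b d ⟨w, hw, hab⟩ ⟨w', hw', hbd⟩
          refine ⟨w' * w, mul_mem hw' hw, ?_⟩
          show (w' : Equiv.Perm _) ((w : Equiv.Perm _) (Quotient.mk (e i.castSucc) a)) = _
          rw [hab, hbd] }
  have hsr : ∀ a b : Ω, s.r a b ↔ ∃ w : ↥φ.range, w ∈ M ∧
      (w : Equiv.Perm (Quotient (e i.castSucc))) (Quotient.mk (e i.castSucc) a) =
        Quotient.mk (e i.castSucc) b := fun a b => Iff.rfl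
  -- G-invariance of s
  have hsG : ∀ g ∈ G, ∀ a b : Ω, s.r a b → s.r (g a) (g b) := by
    intro g hgG a b hab
    obtain ⟨w, hw, hab⟩ := (hsr a b).mp hab
    refine (hsr _ _).mpr ⟨φ' ⟨g, hgG⟩ * w * (φ' ⟨g, hgG⟩)⁻¹, hMnorm.conj_mem w hw _, ?_⟩
    show (φ ⟨g, hgG⟩) ((w : Equiv.Perm _) ((φ ⟨g, hgG⟩)⁻¹ (Quotient.mk (e i.castSucc) (g a)))) = _
    rw [← hφmk ⟨g, hgG⟩ a, (by simp : ∀ (f : Equiv.Perm (Quotient (e i.castSucc))) x, f⁻¹ (f x) = x), hab]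
    exact hφmk ⟨g, hgG⟩ b
  -- normality of s
  have hsnorm : ∀ a b : Ω, s.r a b ↔ ∃ g ∈ G ⊓ classStab s, g a = b := by
    intro a b
    constructor
    · intro hab
      obtain ⟨w, hwM, hw⟩ := (hsr a b).mp hab
      obtain ⟨g₀, hg₀⟩ := w.2
      have h1 : Quotient.mk (e i.castSucc) ((g₀ : Equiv.Perm Ω) a) = Quotient.mk (e i.castSucc) b := by
        rw [← hφmk g₀ a, hg₀]; exact hw
      obtain ⟨h, hh, hhb⟩ := (hnormal i.castSucc ((g₀ : Equiv.Perm Ω) a) b).mp (Quotient.eq.mp h1)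
      refine ⟨h * (g₀ : Equiv.Perm Ω), ⟨mul_mem hh.1 g₀.2, ?_⟩, hhb⟩
      intro x
      refine (hsr _ _).mpr ⟨w⁻¹, inv_mem hwM, ?_⟩
      have h2 : Quotient.mk (e i.castSucc) ((h * (g₀ : Equiv.Perm Ω)) x) =
          (w : Equiv.Perm _) (Quotient.mk (e i.castSucc) x) := by
        have h3 : Quotient.mk (e i.castSucc) (h ((g₀ : Equiv.Perm Ω) x)) =
            Quotient.mk (e i.castSucc) ((g₀ : Equiv.Perm Ω) x) := Quotient.sound (hh.2 _)
        have h4 : Quotient.mk (e i.castSucc) ((g₀ : Equiv.Perm Ω) x) =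
            (w : Equiv.Perm _) (Quotient.mk (e i.castSucc) x) := by rw [← hφmk g₀ x, hg₀]
        exact h3.trans h4
      rw [h2]
      simp
    · rintro ⟨g, hgGS, rfl⟩
      exact s.symm' ((hsr _ _).mpr ((hsr _ _).mp (hgGS.2 a)))
  -- e_{i-1} ≤ s
  have hs1 : ∀ a b : Ω, (e i.castSucc).r a b → s.r a b := by
    intro a b hab
    exact (hsr a b).mpr ⟨1, M.one_mem, by simpa using Quotient.sound hab⟩
  -- s ≤ e_i
  have hs2 : ∀ a b : Ω, s.r a b → (e i.succ).r a b := by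
    intro a b hab
    obtain ⟨w, hwM, hw⟩ := (hsr a b).mp hab
    obtain ⟨h, hh, hφh⟩ := Subgroup.mem_map.mp (hMle hwM)
    rw [Subgroup.mem_subgroupOf, Subgroup.mem_inf] at hh
    have hφh' : φ h = (w : Equiv.Perm _) := congrArg Subtype.val hφh
    have h1 : Quotient.mk (e i.castSucc) ((h : Equiv.Perm Ω) a) = Quotient.mk (e i.castSucc) b := by
      rw [← hφmk h a, hφh']; exact hw
    have h2 : (e i.succ).r ((h : Equiv.Perm Ω) a) b := (hchain i).1 _ _ (Quotient.eq.mp h1)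
    exact (e i.succ).trans' ((e i.succ).symm' (hh.2 a)) h2
  -- by maximality, s is e_{i-1} or e_i; the former is impossible
  have hcase : s = e i.succ := by
    rcases hmax i s hsG hsnorm hs1 hs2 with hcase | hcase
    · exfalso
      have hzval : (z : Equiv.Perm (Quotient (e i.castSucc))) ≠ 1 := fun h => hzne (Subtype.ext h)
      obtain ⟨q, hq⟩ : ∃ q, (z : Equiv.Perm (Quotient (e i.castSucc))) q ≠ q := by
        by_contra hcon
        push_neg at hcon
        exact hzval (Equiv.ext hcon)
      obtain ⟨a, rfl⟩ := Quotient.exists_rep q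
      obtain ⟨b, hb⟩ := Quotient.exists_rep ((z : Equiv.Perm (Quotient (e i.castSucc)))
        (Quotient.mk (e i.castSucc) a))
      have hsab : s.r a b := (hsr a b).mpr ⟨z, hzM, hb.symm⟩
      rw [hcase] at hsab
      exact hq (hb.symm.trans (Quotient.sound hsab).symm)
    · exact hcase
  -- finale: the orbits are the M-orbits, of size dividing p
  refine ⟨p, hp, ?_⟩
  intro a
  have horb : {x : Quotient (e i.castSucc) |
      ∃ g ∈ G ⊓ classStab (e i.succ), x = Quotient.mk (e i.castSucc) (g a)}
      = MulAction.orbit ↥M (Quotient.mk (e i.castSucc) a) := by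
    ext x
    constructor
    · rintro ⟨g, hgGS, rfl⟩
      have hei : (e i.succ).r a (g a) := (hnormal i.succ a (g a)).mpr ⟨g, hgGS, rfl⟩
      rw [← hcase] at hei
      obtain ⟨w, hwM, hw⟩ := (hsr _ _).mp hei
      exact ⟨⟨w, hwM⟩, hw⟩
    · rintro ⟨w, rfl⟩
      obtain ⟨b, hb⟩ := Quotient.exists_rep (((w : ↥φ.range) : Equiv.Perm (Quotient (e i.castSucc)))
        (Quotient.mk (e i.castSucc) a))
      have hsab : s.r a b := (hsr a b).mpr ⟨w.1, w.2, hb.symm⟩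
      rw [hcase] at hsab
      obtain ⟨g, hgGS, hga⟩ := (hnormal i.succ a b).mp hsab
      refine ⟨g, hgGS, ?_⟩
      rw [hga]
      exact hb.symm
  rw [horb]
  intro hne1
  have hcard := Nat.card_congr (MulAction.orbitProdStabilizerEquivGroup ↥M
    (Quotient.mk (e i.castSucc) a))
  rw [Nat.card_prod] at hcard
  have hoc : (MulAction.orbit ↥M (Quotient.mk (e i.castSucc) a)).ncard *
      Nat.card (MulAction.stabilizer ↥M (Quotient.mk (e i.castSucc) a)) = p := by
    rw [← Nat.card_coe_set_eq, hcard, hcardM]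
  have hdvd : (MulAction.orbit ↥M (Quotient.mk (e i.castSucc) a)).ncard ∣ p :=
    ⟨_, hoc.symm⟩
  exact (hp.eq_one_or_self_of_dvd _ hdvd).resolve_left hne1
end
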